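/- Let a_n := C(2n,n)/4^n and let f : ℕ → ℝ satisfy ∑_{n=0}^∞ a_n·|f(n)| < ∞. Then the family (a_{n_0}·f(n_1)/(2n_0−1)) indexed by pairs of integers with n_0 > n_1 ≥ 0 is absolutely summable and ∑_{n_0 > n_1 ≥ 0} a_{n_0}·f(n_1)/(2n_0−1) = ∑_{n=0}^∞ a_n·f(n). (This is the paper's Theorem 5.2 in equivalent general form: taking f(n) to be any of the convergent multiple tail series appearing there, prepending a strictly larger summation index n_0 with factor a_{n_0}/(2n_0−1) and deleting the factor a_{n_1} leaves the value of the multiple series unchanged.) -/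

import Mathlib

noncomputable def aa (n : ℕ) : ℝ := (Nat.choose (2 * n) n : ℝ) / 4 ^ n

lemma aa_pos (n : ℕ) : 0 < aa n := by
  unfold aa
  have h : 0 < Nat.choose (2 * n) n := Nat.choose_pos (by omega)
  have : (0:ℝ) < (Nat.choose (2 * n) n : ℝ) := by exact_mod_cast h
  positivity

lemma aa_succ (n : ℕ) : aa (n + 1) = aa n * (2 * n + 1) / (2 * n + 2) := by
  have h' : ((n : ℝ) + 1) * (Nat.choose (2 * (n + 1)) (n + 1) : ℝ)
      = 2 * (2 * n + 1) * (Nat.choose (2 * n) n : ℝ) := by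
    exact_mod_cast Nat.succ_mul_centralBinom_succ n
  unfold aa
  have hn1 : ((n : ℝ) + 1) ≠ 0 := by positivity
  have h4n : (4 : ℝ) ^ n ≠ 0 := by positivity
  have h4 : (4 : ℝ) ^ (n + 1) = 4 ^ n * 4 := by ring
  rw [h4]
  field_simp
  linear_combination 2 * h'

lemma aa_sq (n : ℕ) : aa n ^ 2 * (n + 1) ≤ 1 := by
  induction n with
  | zero => simp [aa]
  | succ n ih =>
    rw [aa_succ]
    have h1 : (0:ℝ) < 2 * n + 2 := by positivity
    have := aa_pos n
    rw [div_pow, div_mul_eq_mul_div, div_le_one (by positivity)]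
    push_cast
    nlinarith [sq_nonneg (aa n), ih]

lemma aa_tendsto : Filter.Tendsto aa Filter.atTop (nhds 0) := by
  have hb : Filter.Tendsto (fun n : ℕ => Real.sqrt (1 / (n + 1))) Filter.atTop (nhds 0) := by
    have := (tendsto_one_div_add_atTop_nhds_zero_nat).sqrt
    simpa using this
  refine squeeze_zero (fun n => (aa_pos n).le) (fun n => ?_) hb
  have h : aa n ^ 2 ≤ 1 / (n + 1) := by
    rw [le_div_iff₀ (by positivity)]
    simpa using aa_sq n
  calc aa n = Real.sqrt (aa n ^ 2) := by rw [Real.sqrt_sq (aa_pos n).le]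
    _ ≤ Real.sqrt (1 / (n + 1)) := Real.sqrt_le_sqrt h

lemma aa_key (n : ℕ) : aa (n + 1) / (2 * ((n + 1 : ℕ) : ℝ) - 1) = aa n - aa (n + 1) := by
  rw [aa_succ]
  have h1 : (0:ℝ) < 2 * n + 2 := by positivity
  push_cast
  have h2 : (2 : ℝ) * (n + 1) - 1 = 2 * n + 1 := by ring
  rw [h2]
  field_simp
  ring

lemma aa_term_nonneg (n : ℕ) : 0 ≤ aa (n + 1) / (2 * ((n + 1 : ℕ) : ℝ) - 1) := by
  have h0 : (0:ℝ) ≤ (n:ℝ) := n.cast_nonneg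
  have : (0:ℝ) < 2 * ((n + 1 : ℕ) : ℝ) - 1 := by push_cast; linarith
  exact div_nonneg (aa_pos _).le this.le

/-- Telescoping tail sum. -/
lemma aa_tail (m : ℕ) :
    HasSum (fun k : ℕ => aa (m + k + 1) / (2 * ((m + k + 1 : ℕ) : ℝ) - 1)) (aa m) := by
  have hnn : ∀ k : ℕ, 0 ≤ aa (m + k + 1) / (2 * ((m + k + 1 : ℕ) : ℝ) - 1) :=
    fun k => aa_term_nonneg (m + k)
  rw [hasSum_iff_tendsto_nat_of_nonneg hnn]
  have heq : ∀ K : ℕ, ∑ k ∈ Finset.range K, aa (m + k + 1) / (2 * ((m + k + 1 : ℕ) : ℝ) - 1)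
      = aa m - aa (m + K) := by
    intro K
    have h : ∀ k, aa (m + k + 1) / (2 * ((m + k + 1 : ℕ) : ℝ) - 1)
        = aa (m + k) - aa (m + k + 1) := fun k => aa_key (m + k)
    simp_rw [h]
    exact Finset.sum_range_sub' (fun k => aa (m + k)) K
  have h0 : Filter.Tendsto (fun K : ℕ => aa (m + K)) Filter.atTop (nhds 0) := by
    refine aa_tendsto.comp (Filter.tendsto_atTop_mono (fun K => Nat.le_add_left K m) Filter.tendsto_id)
  have htend : Filter.Tendsto (fun K : ℕ => aa m - aa (m + K)) Filter.atTop (nhds (aa m)) := by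
    simpa using tendsto_const_nhds.sub h0
  exact (Filter.tendsto_congr heq).mpr htend

/-- Let `a_n := C(2n,n)/4^n` and let `f : ℕ → ℝ` satisfy
`∑ a_n·|f n| < ∞`. Then the family `a_{n₀}·f(n₁)/(2n₀−1)` indexed by pairs `n₀ > n₁ ≥ 0`
is absolutely summable with sum `∑_{n=0}^∞ a_n·f(n)`. -/
theorem apery_prepend_gamma_block (f : ℕ → ℝ)
    (hf : Summable fun n : ℕ => (Nat.choose (2 * n) n : ℝ) / 4 ^ n * |f n|) :
    HasSum
      (fun p : {p : ℕ × ℕ // p.2 < p.1} =>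
        (Nat.choose (2 * p.1.1) p.1.1 : ℝ) / 4 ^ p.1.1 * f p.1.2 /
          (2 * (p.1.1 : ℝ) - 1))
      (∑' n : ℕ, (Nat.choose (2 * n) n : ℝ) / 4 ^ n * f n) := by
  have hf' : Summable fun n : ℕ => aa n * |f n| := hf
  set F : ℕ × ℕ → ℝ := fun p =>
    aa (p.1 + p.2 + 1) * f p.1 / (2 * ((p.1 + p.2 + 1 : ℕ) : ℝ) - 1) with hF
  have hden : ∀ p : ℕ × ℕ, (0:ℝ) < 2 * ((p.1 + p.2 + 1 : ℕ) : ℝ) - 1 := by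
    intro p
    have h1 : (0:ℝ) ≤ p.1 := Nat.cast_nonneg _
    have h2 : (0:ℝ) ≤ p.2 := Nat.cast_nonneg _
    push_cast
    linarith
  have habs : ∀ p : ℕ × ℕ,
      |F p| = aa (p.1 + p.2 + 1) * |f p.1| / (2 * ((p.1 + p.2 + 1 : ℕ) : ℝ) - 1) := by
    intro p
    rw [hF]
    rw [abs_div, abs_mul, abs_of_pos (hden p), abs_of_pos (aa_pos _)]
  have hfiber : ∀ b : ℕ, HasSum (fun k => F (b, k)) (aa b * f b) := by
    intro b
    have := (aa_tail b).mul_right (f b)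
    refine this.congr_fun fun k => ?_
    simp only [hF]
    ring
  have hfiberabs : ∀ b : ℕ, HasSum (fun k => |F (b, k)|) (aa b * |f b|) := by
    intro b
    have := (aa_tail b).mul_right (|f b|)
    refine this.congr_fun fun k => ?_
    rw [habs (b, k)]
    ring
  have hsumabs : Summable fun p : ℕ × ℕ => |F p| := by
    rw [summable_prod_of_nonneg (fun p => abs_nonneg _)]
    refine ⟨fun b => (hfiberabs b).summable, ?_⟩
    refine hf'.congr fun b => ?_
    exact ((hfiberabs b).tsum_eq).symm
  have hsum : Summable F := summable_abs_iff.mp hsumabs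
  have hFsum : HasSum F (∑' p, F p) := hsum.hasSum
  have hfib : HasSum (fun b : ℕ => aa b * f b) (∑' p, F p) :=
    hFsum.prod_fiberwise hfiber
  have hS : Summable fun n : ℕ => aa n * f n := by
    rw [← summable_abs_iff]
    refine hf'.congr fun n => ?_
    rw [abs_mul, abs_of_pos (aa_pos n)]
  have hSum : HasSum (fun n : ℕ => aa n * f n)
      (∑' n : ℕ, (Nat.choose (2 * n) n : ℝ) / 4 ^ n * f n) := hS.hasSum
  have hval : (∑' p, F p) = ∑' n : ℕ, (Nat.choose (2 * n) n : ℝ) / 4 ^ n * f n :=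
    hfib.unique hSum
  rw [hval] at hFsum
  let e : ℕ × ℕ ≃ {p : ℕ × ℕ // p.2 < p.1} :=
    { toFun := fun p => ⟨(p.1 + p.2 + 1, p.1), by omega⟩
      invFun := fun q => (q.1.2, q.1.1 - q.1.2 - 1)
      left_inv := fun p => by
        obtain ⟨x, y⟩ := p
        have h : x + y + 1 - x - 1 = y := by omega
        simp [h]
      right_inv := fun q => by
        have := q.2
        apply Subtype.ext
        simp [Prod.ext_iff]
        omega }
  refine e.hasSum_iff.mp ?_
  refine hFsum.congr_fun fun p => ?_
  rfl
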